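/- arXiv:2011.00482 — 2 statements merged into one kernel-verified Lean document; each statement's English description precedes it below -/
import Mathlib

section
/- None of the composites β∘γ, γ∘α, α∘β, and α∘β∘γ has a fixed point on T⁷; that is, for every x ∈ T⁷ one has β(γ(x)) ≠ x, γ(α(x)) ≠ x, α(β(x)) ≠ x, and α(β(γ(x))) ≠ x. -/
/-- The 7-torus `T⁷ = (ℝ/ℤ)⁷`. -/
abbrev T7 := Fin 7 → AddCircle (1 : ℝ)

/-- The class of `½` in `ℝ/ℤ`. -/
noncomputable def half : AddCircle (1 : ℝ) := ((1 / 2 : ℝ) : AddCircle (1 : ℝ))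

/-- `α(x) = (−x₁, −x₂, −x₃, −x₄, x₅, x₆, x₇)`. -/
noncomputable def α (x : T7) : T7 := ![-x 0, -x 1, -x 2, -x 3, x 4, x 5, x 6]

/-- `β(x) = (−x₁, ½−x₂, x₃, x₄, −x₅, −x₆, −x₇)`. -/
noncomputable def β (x : T7) : T7 := ![-x 0, half - x 1, x 2, x 3, -x 4, -x 5, -x 6]

/-- `γ(x) = (½−x₁, x₂, ½−x₃, x₄, −x₅, x₆, −x₇)`. -/
noncomputable def γ (x : T7) : T7 := ![half - x 0, x 1, half - x 2, x 3, -x 4, x 5, -x 6]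

lemma half_ne_zero : half ≠ 0 := by
  unfold half
  intro h
  rw [AddCircle.coe_eq_zero_iff] at h
  obtain ⟨n, hn⟩ := h

  have : (n : ℝ) = 1 / 2 := by simpa using hn
  have h2 : ((2 * n : ℤ) : ℝ) = 1 := by push_cast; linarith
  have h3 : (2 * n : ℤ) = 1 := by exact_mod_cast h2
  omega

/-- None of `β∘γ`, `γ∘α`, `α∘β`, `α∘β∘γ` has a fixed point on `T⁷`. -/
theorem stmt4 (x : T7) :
    β (γ x) ≠ x ∧ γ (α x) ≠ x ∧ α (β x) ≠ x ∧ α (β (γ x)) ≠ x := by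
  refine ⟨fun h => ?_, fun h => ?_, fun h => ?_, fun h => ?_⟩
  · have h0 := congrFun h 0
    simp only [β, γ, Matrix.cons_val_zero, neg_sub] at h0
    exact half_ne_zero (sub_eq_self.mp h0)
  · have h0 := congrFun h 0
    simp only [γ, α, Matrix.cons_val_zero, sub_neg_eq_add] at h0
    exact half_ne_zero (by
      have := add_right_cancel (a := half) (b := x 0) (c := 0) ?_
      · exact this
      · simpa using h0)
  · have h1 := congrFun h 1
    simp only [α, β, Matrix.cons_val_one, Matrix.head_cons, Matrix.cons_val_zero, neg_sub] at h1
    exact half_ne_zero (sub_eq_self.mp h1)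
  · have h1 := congrFun h 1
    simp only [α, β, γ, Matrix.cons_val_one, Matrix.head_cons, Matrix.cons_val_zero, neg_sub] at h1
    exact half_ne_zero (sub_eq_self.mp h1)
end

section
/- The fixed-point set of α in T⁷ equals {x ∈ T⁷ : 2·x_i = 0 for i = 1,2,3,4}, i.e. the set of x whose first four coordinates each lie in {0, ½} ⊂ ℝ/ℤ. Consequently, Fix(α) is the union over ε ∈ {0, ½}⁴ of the 16 sets T_ε = {x ∈ T⁷ : x_i = ε_i for i = 1,2,3,4}; these 16 sets are pairwise disjoint, and each T_ε is homeomorphic to the 3-torus (ℝ/ℤ)³ (so the fixed points of α form 16 disjoint copies of T³). -/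
/-- The 3-torus `T_ε = {x ∈ T⁷ : x_i = ε_i for i = 1,2,3,4}`. -/
def Tset (ε : Fin 4 → AddCircle (1 : ℝ)) : Set T7 :=
  {x | ∀ i : Fin 4, x (Fin.castLE (by norm_num) i) = ε i}

/-- The index set `{0, ½}⁴` of the 16 fixed 3-tori of `α`. -/
noncomputable def Eps : Set (Fin 4 → AddCircle (1 : ℝ)) :=
  {ε | ∀ i, ε i = 0 ∨ ε i = half}

lemma two_smul_iff (x : AddCircle (1:ℝ)) : 2 • x = 0 ↔ x = 0 ∨ x = half := by
  constructor
  · intro h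
    induction x using QuotientAddGroup.induction_on with
    | H r =>
      rw [← AddCircle.coe_nsmul, AddCircle.coe_eq_zero_iff] at h
      obtain ⟨n, hn⟩ := h
      rw [zsmul_eq_mul, mul_one, nsmul_eq_mul] at hn
      rcases Int.even_or_odd n with ⟨k, hk⟩ | ⟨k, hk⟩
      · left
        rw [AddCircle.coe_eq_zero_iff]
        exact ⟨k, by rw [zsmul_eq_mul, mul_one]; subst hk; push_cast at hn ⊢; linarith⟩
      · right
        rw [half, ← sub_eq_zero, ← AddCircle.coe_sub, AddCircle.coe_eq_zero_iff]
        exact ⟨k, by rw [zsmul_eq_mul, mul_one]; subst hk; push_cast at hn ⊢; linarith⟩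
  · rintro (rfl | rfl)
    · simp
    · rw [half, ← AddCircle.coe_nsmul, AddCircle.coe_eq_zero_iff]
      exact ⟨1, by norm_num⟩

lemma neg_eq_self_iff (x : AddCircle (1:ℝ)) : -x = x ↔ 2 • x = 0 := by
  rw [neg_eq_iff_add_eq_zero, two_nsmul]

lemma fix_iff (x : T7) :
    α x = x ↔ ∀ i : Fin 4, 2 • x (Fin.castLE (by norm_num) i) = 0 := by
  constructor
  · intro h i
    have := congrFun h (Fin.castLE (by norm_num) i)
    fin_cases i <;> simpa [α, Fin.castLE, neg_eq_self_iff] using this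
  · intro h
    funext j
    fin_cases j <;> simp [α]
    · exact (neg_eq_self_iff _).mpr (h 0)
    · exact (neg_eq_self_iff _).mpr (h 1)
    · exact (neg_eq_self_iff _).mpr (h 2)
    · exact (neg_eq_self_iff _).mpr (h 3)

noncomputable def epsEquiv : ↥Eps ≃ (Fin 4 → Bool) := by
  classical
  exact {
    toFun := fun e i => if e.1 i = 0 then false else true
    invFun := fun b => ⟨fun i => if b i then half else 0, fun i => by
      by_cases h : b i <;> simp [h]⟩
    left_inv := fun e => by
      apply Subtype.ext
      funext i
      rcases e.2 i with h | h <;> simp [h, half_ne_zero]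
    right_inv := fun b => by
      funext i
      by_cases h : b i <;> simp [h, half_ne_zero] }

noncomputable def tsetHomeo (ε : Fin 4 → AddCircle (1 : ℝ)) :
    ↥(Tset ε) ≃ₜ (Fin 3 → AddCircle (1 : ℝ)) where
  toFun x := fun j => x.1 ⟨j.1 + 4, by have := j.2; omega⟩
  invFun y := ⟨fun i => if h : i.1 < 4 then ε ⟨i.1, h⟩
      else y ⟨i.1 - 4, by have := i.2; omega⟩,
    fun i => dif_pos i.2⟩
  left_inv x := by
    apply Subtype.ext
    funext i
    dsimp only
    by_cases h : i.1 < 4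
    · rw [dif_pos h]
      have := x.2 ⟨i.1, h⟩
      rw [← this]
      exact congrArg x.1 (Fin.ext rfl)
    · rw [dif_neg h]
      exact congrArg x.1 (Fin.ext (by simp; omega))
  right_inv y := by
    funext j
    dsimp only
    rw [dif_neg (by simp)]
    exact congrArg y (Fin.ext (by simp))
  continuous_toFun := by
    show Continuous fun x : ↥(Tset ε) => fun j : Fin 3 =>
      x.1 (⟨j.1 + 4, by have := j.2; omega⟩ : Fin 7)
    apply continuous_pi
    intro j
    exact (continuous_apply _).comp continuous_subtype_val
  continuous_invFun := by
    apply Continuous.subtype_mk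
    apply continuous_pi
    intro i
    by_cases h : i.1 < 4
    · simp only [dif_pos h]; exact continuous_const
    · simp only [dif_neg h]; exact continuous_apply _

/-- The fixed-point set of `α` in `T⁷` is `{x : 2·x_i = 0 for i = 1,2,3,4}`; it is the
union of the 16 pairwise disjoint sets `T_ε`, `ε ∈ {0,½}⁴`, each homeomorphic to the
3-torus `(ℝ/ℤ)³`. -/
theorem stmt5 :
    ({x : T7 | α x = x} =
      {x : T7 | ∀ i : Fin 4, 2 • x (Fin.castLE (by norm_num) i) = 0}) ∧
    ({x : T7 | α x = x} = ⋃ ε ∈ Eps, Tset ε) ∧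
    (∀ ε ∈ Eps, ∀ ε' ∈ Eps, ε ≠ ε' → Disjoint (Tset ε) (Tset ε')) ∧
    Eps.ncard = 16 ∧
    (∀ ε ∈ Eps, Nonempty (Tset ε ≃ₜ (Fin 3 → AddCircle (1 : ℝ)))) := by
  refine ⟨?_, ?_, ?_, ?_, ?_⟩
  · ext x
    exact fix_iff x
  · ext x
    simp only [Set.mem_setOf_eq, Set.mem_iUnion, exists_prop]
    rw [fix_iff]
    constructor
    · intro h
      refine ⟨fun i => x (Fin.castLE (by norm_num) i),
        fun i => (two_smul_iff _).mp (h i), fun i => rfl⟩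
    · rintro ⟨ε, hε, hx⟩ i
      rw [hx i]
      exact (two_smul_iff _).mpr (hε i)
  · intro ε hε ε' hε' hne
    rw [Set.disjoint_left]
    intro x hx hx'
    exact hne (funext fun i => (hx i).symm.trans (hx' i))
  · rw [← Nat.card_coe_set_eq, Nat.card_congr epsEquiv]
    simp [Nat.card_eq_fintype_card]
  · intro ε _
    exact ⟨tsetHomeo ε⟩
end
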